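/- (Weighted estimate for the Duhamel kernel.) Let M2 > 0 satisfy σ(k) > M2|k|⁴ for all k ∈ Ω_I. Then: (1) if g(t) = bt with 0 < b < M2/2, then for all 0 ≤ s ≤ t and all k ∈ Ω_I, (g(t) − g(s))|k| − (t−s)σ(k) ≤ −(M2(t−s)/2)|k|⁴; (2) if g(t) = a t^{1/4} with a > 0, then there exists a constant C = C(a) > 0 such that for all 0 ≤ s ≤ t and all k ∈ Ω_I, (g(t) − g(s))|k| − (t−s)σ(k) ≤ C − (M2(t−s)/2)|k|⁴. -/

import Mathlib

open MeasureTheory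
open scoped BigOperators ENNReal NNReal

noncomputable section

/-- Euclidean norm `|k|` of a lattice point `k ∈ ℤⁿ`. -/
def knorm {n : ℕ} (k : Fin n → ℤ) : ℝ := Real.sqrt (∑ i, ((k i : ℝ)) ^ 2)

/-- The Fourier symbol `σ(k)` of `Δ² + Δ` on the torus `∏ᵢ [0, Lᵢ]`. -/
def ksSymbol {n : ℕ} (L : Fin n → ℝ) (k : Fin n → ℤ) : ℝ :=
  (∑ i, (2 * Real.pi / L i) ^ 2 * ((k i : ℝ)) ^ 2) ^ 2
    - ∑ i, (2 * Real.pi / L i) ^ 2 * ((k i : ℝ)) ^ 2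

/-- The time interval `[0, T]`, where `T = ⊤` is allowed (giving `[0, ∞)`). -/
def timeSet (T : ℝ≥0∞) : Set ℝ := {t : ℝ | 0 ≤ t ∧ ENNReal.ofReal t ≤ T}

/-- Case A (`Lᵢ < 2π` for all `i` and `T = ∞`) or Case B (`T ∈ (0, ∞)`). -/
def CaseAB {n : ℕ} (L : Fin n → ℝ) (T : ℝ≥0∞) : Prop :=
  (T = ⊤ ∧ ∀ i, L i < 2 * Real.pi) ∨ (0 < T ∧ T ≠ ⊤)

/-- `‖f‖_{Y^m} = Σ_{k ∈ ℤⁿ_*} |k|^m |f̂(k)|` (zero-mean functions are identified with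
their Fourier coefficient sequences on `ℤⁿ_* = ℤⁿ \ {0}`). -/
def Ynorm {n : ℕ} (m : ℝ) (f : (Fin n → ℤ) → ℂ) : ℝ≥0∞ :=
  ∑' k : {k : Fin n → ℤ // k ≠ 0}, ENNReal.ofReal (knorm k.1 ^ m * ‖f k.1‖)

/-- `‖f‖_{𝒴^m} = Σ_{k ∈ ℤⁿ_*} sup_{t ∈ [0,T]} |k|^m |f̂(t,k)|`. -/
def calYnorm {n : ℕ} (T : ℝ≥0∞) (m : ℝ) (f : ℝ → (Fin n → ℤ) → ℂ) : ℝ≥0∞ :=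
  ∑' k : {k : Fin n → ℤ // k ≠ 0},
    ⨆ t ∈ timeSet T, ENNReal.ofReal (knorm k.1 ^ m * ‖f t k.1‖)

/-- `‖f‖_{𝒳^m} = Σ_{k ∈ ℤⁿ_*} ∫_0^T |k|^m |f̂(t,k)| dt`. -/
def calXnorm {n : ℕ} (T : ℝ≥0∞) (m : ℝ) (f : ℝ → (Fin n → ℤ) → ℂ) : ℝ≥0∞ :=
  ∑' k : {k : Fin n → ℤ // k ≠ 0},
    ∫⁻ t in timeSet T, ENNReal.ofReal (knorm k.1 ^ m * ‖f t k.1‖)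

/-- `‖f‖_{PM^m} = sup_{k ∈ ℤⁿ_*} |k|^m |f̂(k)|`. -/
def PMnorm {n : ℕ} (m : ℝ) (f : (Fin n → ℤ) → ℂ) : ℝ≥0∞ :=
  ⨆ k : {k : Fin n → ℤ // k ≠ 0}, ENNReal.ofReal (knorm k.1 ^ m * ‖f k.1‖)

/-- `‖f‖_{𝒫ℳ^m} = sup_{t ∈ [0,T]} sup_{k ∈ ℤⁿ_*} |k|^m |f̂(t,k)|`. -/
def calPMnorm {n : ℕ} (T : ℝ≥0∞) (m : ℝ) (f : ℝ → (Fin n → ℤ) → ℂ) : ℝ≥0∞ :=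
  ⨆ t ∈ timeSet T, ⨆ k : {k : Fin n → ℤ // k ≠ 0},
    ENNReal.ofReal (knorm k.1 ^ m * ‖f t k.1‖)

/-- The semigroup `S`, acting on Fourier coefficients: `(Sψ₀)^(t,k) = e^{-tσ(k)} ψ̂₀(k)`. -/
def ksSemigroup {n : ℕ} (L : Fin n → ℝ) (ψ₀ : (Fin n → ℤ) → ℂ) :
    ℝ → (Fin n → ℤ) → ℂ :=
  fun t k => (Real.exp (-(t * ksSymbol L k)) : ℂ) * ψ₀ k

/-- The (normalized) bilinear operator `B`, given on Fourier coefficients by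
`B̂(F,G)(t,k) = -∫_0^t e^{-(t-s)σ(k)} Σ_{j ∈ ℤⁿ_*, j ≠ k} ((k-j)·j) F̂(s,k-j) Ĝ(s,j) ds`. -/
def ksBilinear {n : ℕ} (L : Fin n → ℝ) (F G : ℝ → (Fin n → ℤ) → ℂ) :
    ℝ → (Fin n → ℤ) → ℂ :=
  fun t k =>
    -∫ s in Set.Ioc (0 : ℝ) t,
      (Real.exp (-((t - s) * ksSymbol L k)) : ℂ) *
        ∑' j : {j : Fin n → ℤ // j ≠ 0 ∧ j ≠ k},
          ((∑ i, ((k i : ℝ) - (j.1 i : ℝ)) * (j.1 i : ℝ) : ℝ) : ℂ) *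
            F s (k - j.1) * G s j.1

/-- `ψ` is a mild solution of the Kuramoto–Sivashinsky equation on `[0,T]` with data `ψ₀`:
`ψ̂(t,k) = e^{-tσ(k)} ψ̂₀(k) - (1/2) B̂(ψ,ψ)(t,k)` for all `t ∈ [0,T]`, `k ∈ ℤⁿ_*`. -/
def IsMildSolution {n : ℕ} (L : Fin n → ℝ) (T : ℝ≥0∞)
    (ψ₀ : (Fin n → ℤ) → ℂ) (ψ : ℝ → (Fin n → ℤ) → ℂ) : Prop :=
  ∀ t ∈ timeSet T, ∀ k : Fin n → ℤ, k ≠ 0 →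
    ψ t k = (Real.exp (-(t * ksSymbol L k)) : ℂ) * ψ₀ k
      - (1 / 2 : ℂ) * ksBilinear L ψ ψ t k

/-- the weighted estimate for the Duhamel kernel. For `M2 > 0` with
`σ(j) > M2|j|⁴` on `Ω_I`:
(1) if `g(t) = bt`, `0 < b < M2/2`, then for all `0 ≤ s ≤ t` and `k ∈ Ω_I`,
`(g(t)-g(s))|k| - (t-s)σ(k) ≤ -(M2(t-s)/2)|k|⁴`;
(2) if `g(t) = a t^{1/4}`, `a > 0`, then there is `C = C(a) > 0` such that for all
`0 ≤ s ≤ t` and `k ∈ Ω_I`, `(g(t)-g(s))|k| - (t-s)σ(k) ≤ C - (M2(t-s)/2)|k|⁴`. -/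
lemma one_le_knorm {n : ℕ} {k : Fin n → ℤ} (hk : k ≠ 0) : 1 ≤ knorm k := by
  obtain ⟨i, hi⟩ := Function.ne_iff.mp hk
  have h1 : (1 : ℝ) ≤ ∑ j, ((k j : ℝ)) ^ 2 := by
    have h0 : (1 : ℝ) ≤ ((k i : ℝ)) ^ 2 := by
      have : (1 : ℤ) ≤ (k i) ^ 2 := by
        rcases lt_trichotomy (k i) 0 with h | h | h
        · nlinarith
        · exact absurd h hi
        · nlinarith
      exact_mod_cast this
    exact le_trans h0 (Finset.single_le_sum (f := fun j => ((k j : ℝ)) ^ 2)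
      (fun j _ => sq_nonneg _) (Finset.mem_univ i))
  rw [knorm, show (1:ℝ) = Real.sqrt 1 by simp]
  exact Real.sqrt_le_sqrt h1

lemma quarter_sub (s t : ℝ) (hs : 0 ≤ s) (hst : s ≤ t) :
    t ^ ((1:ℝ)/4) - s ^ ((1:ℝ)/4) ≤ (t - s) ^ ((1:ℝ)/4) := by
  have hτ : 0 ≤ t - s := by linarith
  have h := NNReal.rpow_add_le_add_rpow (⟨t - s, hτ⟩ : ℝ≥0) (⟨s, hs⟩ : ℝ≥0)
    (by norm_num : (0:ℝ) ≤ 1/4) (by norm_num : (1:ℝ)/4 ≤ 1)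
  have h2 : ((⟨t - s, hτ⟩ : ℝ≥0) + ⟨s, hs⟩) = (⟨t, by linarith⟩ : ℝ≥0) := by
    ext; simp
  erw [h2] at h
  have h3 := NNReal.coe_le_coe.mpr h
  push_cast [NNReal.coe_rpow, NNReal.coe_mk] at h3
  change (t ^ ((1:ℝ)/4)) ≤ (t-s)^((1:ℝ)/4) + s^((1:ℝ)/4) at h3
  linarith

lemma young_quart {a c : ℝ} (ha : 0 < a) (hc : 0 < c) :
    ∀ x : ℝ, 0 ≤ x → a * x - c * x ^ 4 ≤ a * (a / c) ^ ((1:ℝ)/3) := by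
  intro x hx
  set X := (a / c) ^ ((1:ℝ)/3) with hX
  have hac : 0 ≤ a / c := le_of_lt (div_pos ha hc)
  have hX0 : 0 ≤ X := Real.rpow_nonneg hac _
  have hX3 : X ^ 3 = a / c := by
    rw [hX, ← Real.rpow_natCast (_ ^ _) 3, ← Real.rpow_mul hac]
    norm_num
  by_cases hxX : x ≤ X
  · have : a * x ≤ a * X := by nlinarith
    nlinarith [pow_nonneg hx 4]
  · push_neg at hxX
    have h3 : X ^ 3 ≤ x ^ 3 := pow_le_pow_left₀ hX0 hxX.le 3
    have : a ≤ c * x ^ 3 := by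
      rw [hX3] at h3
      calc a = c * (a / c) := by field_simp
      _ ≤ c * x ^ 3 := by nlinarith
    nlinarith [mul_nonneg hX0 ha.le]

theorem weighted_duhamel_estimate {n : ℕ} (hn : 1 ≤ n)
    (L : Fin n → ℝ) (hL : ∀ i, 0 < L i)
    (M2 : ℝ) (hM2 : 0 < M2)
    (hM2' : ∀ j : Fin n → ℤ, j ≠ 0 → 0 < ksSymbol L j →
      M2 * knorm j ^ (4 : ℕ) < ksSymbol L j) :
    (∀ b : ℝ, 0 < b → b < M2 / 2 →
      ∀ s t : ℝ, 0 ≤ s → s ≤ t →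
        ∀ k : Fin n → ℤ, k ≠ 0 → 0 < ksSymbol L k →
          (b * t - b * s) * knorm k - (t - s) * ksSymbol L k
            ≤ -(M2 * (t - s) / 2) * knorm k ^ (4 : ℕ)) ∧
    (∀ a : ℝ, 0 < a → ∃ C : ℝ, 0 < C ∧
      ∀ s t : ℝ, 0 ≤ s → s ≤ t →
        ∀ k : Fin n → ℤ, k ≠ 0 → 0 < ksSymbol L k →
          (a * t ^ ((1 : ℝ) / 4) - a * s ^ ((1 : ℝ) / 4)) * knorm k
              - (t - s) * ksSymbol L k
            ≤ C - (M2 * (t - s) / 2) * knorm k ^ (4 : ℕ)) := by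
  constructor
  · intro b hb hb2 s t hs hst k hk hσ
    have hσ' := hM2' k hk hσ
    have hN := one_le_knorm hk
    have hτ : 0 ≤ t - s := by linarith
    set N := knorm k
    have hN4 : N ≤ N ^ 4 := by nlinarith [pow_le_pow_right₀ (by linarith : (1:ℝ) ≤ N) (by norm_num : 1 ≤ 4)]
    -- b(t-s)N ≤ (M2/2)(t-s)N^4 and -(t-s)σ ≤ -(t-s)M2 N^4
    have h1 : (t - s) * (M2 * N ^ 4) ≤ (t - s) * ksSymbol L k :=
      mul_le_mul_of_nonneg_left hσ'.le hτ
    have hN0 : (0:ℝ) ≤ N := by linarith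
    have h2 : b * (t - s) * N ≤ (M2 / 2) * (t - s) * N ^ 4 := by
      have hb3 : b * ((t - s) * N) ≤ (M2 / 2) * ((t - s) * N) :=
        mul_le_mul_of_nonneg_right hb2.le (mul_nonneg hτ hN0)
      have h4 : (M2 / 2) * ((t - s) * N) ≤ (M2 / 2) * ((t - s) * N ^ 4) := by
        have := mul_le_mul_of_nonneg_left hN4 hτ
        nlinarith
      nlinarith
    nlinarith
  · intro a ha
    have hc : 0 < M2 / 2 := by linarith
    refine ⟨a * (a / (M2 / 2)) ^ ((1:ℝ)/3) + 1, by positivity, ?_⟩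
    intro s t hs hst k hk hσ
    have hσ' := hM2' k hk hσ
    have hN := one_le_knorm hk
    have hN0 : (0:ℝ) ≤ knorm k := by linarith
    have hτ : 0 ≤ t - s := by linarith
    set N := knorm k
    -- g(t)-g(s) ≤ a (t-s)^{1/4}
    have hsub : a * t ^ ((1:ℝ)/4) - a * s ^ ((1:ℝ)/4) ≤ a * (t - s) ^ ((1:ℝ)/4) := by
      have := quarter_sub s t hs hst
      nlinarith
    set x := (t - s) ^ ((1:ℝ)/4) * N with hxdef
    have hx0 : 0 ≤ x := mul_nonneg (Real.rpow_nonneg hτ _) hN0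
    have hx4 : x ^ 4 = (t - s) * N ^ 4 := by
      rw [hxdef, mul_pow, ← Real.rpow_natCast ((t-s) ^ ((1:ℝ)/4)) 4,
        ← Real.rpow_mul hτ]
      norm_num
    have hy := young_quart ha hc x hx0
    rw [hx4] at hy
    have h1 : (t - s) * (M2 * N ^ 4) ≤ (t - s) * ksSymbol L k :=
      mul_le_mul_of_nonneg_left hσ'.le hτ
    have hsubN : (a * t ^ ((1:ℝ)/4) - a * s ^ ((1:ℝ)/4)) * N ≤ a * x := by
      rw [hxdef, ← mul_assoc]
      exact mul_le_mul_of_nonneg_right hsub hN0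
    nlinarith
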